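/- For the layer with Ω(ρ) = 1 - (ρ-R)/(S-R) on ρ > R and height function h with H(x) = (x-R)/√((x-R)²+C²), the outgoing characteristic speed c₊ = Ω²/(L(1-H)) tends to 2(S-R)²/C² as ρ → S⁻. -/

import Mathlib

open Set Filter

/-- For the layer with Ω(ρ) = 1 - (ρ-R)/(S-R) on (R,S), L = 1,
x(ρ) = R + (ρ-R)/Ω(ρ) and boost function H = (x-R)/√((x-R)²+C²), the outgoing
characteristic speed c₊ = Ω²/(L(1-H)) tends to 2(S-R)²/C² as ρ → S⁻. -/
theorem layer_outgoing_speed_limit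
    (R S C : ℝ) (hR : 0 < R) (hRS : R < S) (hC : 0 < C)
    (Ω x H c : ℝ → ℝ)
    (hΩ : ∀ ρ, Ω ρ = 1 - (ρ - R) / (S - R))
    (hx : ∀ ρ, x ρ = R + (ρ - R) / Ω ρ)
    (hH : ∀ ρ, H ρ = (x ρ - R) / Real.sqrt ((x ρ - R) ^ 2 + C ^ 2))
    (hc : ∀ ρ, c ρ = (Ω ρ) ^ 2 / (1 * (1 - H ρ))) :
    Tendsto c (nhdsWithin S (Iio S)) (nhds (2 * (S - R) ^ 2 / C ^ 2)) := by
  have hSR : (0:ℝ) < S - R := sub_pos.mpr hRS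
  set g : ℝ → ℝ := fun ρ =>
    Real.sqrt ((ρ - R) ^ 2 + (1 - (ρ - R) / (S - R)) ^ 2 * C ^ 2) *
      (Real.sqrt ((ρ - R) ^ 2 + (1 - (ρ - R) / (S - R)) ^ 2 * C ^ 2) + (ρ - R)) / C ^ 2
    with hg
  have hgcont : Continuous g := by
    apply Continuous.div_const
    fun_prop
  have hgS : g S = 2 * (S - R) ^ 2 / C ^ 2 := by
    simp only [hg]
    rw [div_self hSR.ne', sub_self]
    rw [show (0:ℝ) ^ 2 * C ^ 2 = 0 by ring, add_zero, Real.sqrt_sq hSR.le]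
    ring
  have hlim : Tendsto g (nhdsWithin S (Iio S)) (nhds (2 * (S - R) ^ 2 / C ^ 2)) := by
    rw [← hgS]; exact (hgcont.tendsto S).mono_left nhdsWithin_le_nhds
  refine hlim.congr' ?_
  have hmem : Ioo R S ∈ nhdsWithin S (Iio S) := by
    rw [mem_nhdsWithin]
    exact ⟨Ioi R, isOpen_Ioi, hRS, fun t ht => ⟨ht.1, ht.2⟩⟩
  filter_upwards [hmem] with ρ hρ
  obtain ⟨h1, h2⟩ := hρ
  have hu : 0 < ρ - R := sub_pos.mpr h1
  have hΩρ : Ω ρ = (S - ρ) / (S - R) := by rw [hΩ]; field_simp; ring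
  have hΩpos : 0 < Ω ρ := by rw [hΩρ]; exact div_pos (sub_pos.mpr h2) hSR
  have hy : x ρ - R = (ρ - R) / Ω ρ := by rw [hx]; ring
  set y := x ρ - R with hydef
  have hypos : 0 < y := hy ▸ div_pos hu hΩpos
  set s := Real.sqrt (y ^ 2 + C ^ 2) with hsdef
  have hs2 : s ^ 2 = y ^ 2 + C ^ 2 := Real.sq_sqrt (by positivity)
  have hspos : 0 < s := Real.sqrt_pos.mpr (by positivity)
  have hsy : y < s := by nlinarith
  have hΩy : Ω ρ * y = ρ - R := by rw [hy]; field_simp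
  have hΩs : Real.sqrt ((ρ - R) ^ 2 + (Ω ρ) ^ 2 * C ^ 2) = Ω ρ * s := by
    rw [show (ρ - R) ^ 2 + (Ω ρ) ^ 2 * C ^ 2 = (Ω ρ) ^ 2 * (y ^ 2 + C ^ 2) by
      nlinarith [hΩy]]
    rw [hsdef, Real.sqrt_mul (by positivity), Real.sqrt_sq hΩpos.le]
  have key : (1 : ℝ) - H ρ ≠ 0 := by
    rw [hH ρ, ← hydef, ← hsdef]
    have : y / s < 1 := (div_lt_one hspos).mpr hsy
    linarith
  simp only [hg]
  rw [← hΩ ρ, hΩs, hc ρ, hH ρ, ← hydef, ← hsdef]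
  rw [div_eq_div_iff (by positivity) (by
    rw [one_mul]
    have : y / s < 1 := (div_lt_one hspos).mpr hsy
    linarith)]
  field_simp
  linear_combination Ω ρ * hs2 - (s - y) * hΩy
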